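/- arXiv:1907.04130 — 2 statements merged into one kernel-verified Lean document; each statement's English description precedes it below -/
import Mathlib

section
/- Let q > 1 and let k'₁, k''₁, k₂, λ₁, λ₂, μ₂ be positive real constants with μ₂ > λ₂. Set S = k'₁(μ₂−λ₂)k₂/(k''₁λ₁²) and K = 9k''₁λ₁²/7. Then there exist Ĉ, Â > 0 and an integer n₀ ≥ 1 (depending on k'₁, k''₁, k₂, λ₁, λ₂, μ₂, q) such that for every integer n ≥ n₀ and every real x > 1: x^n · exp( −(k''₁λ₁²/(2 log q)) log²(x) + (k'₁(μ₂−λ₂)k₂/log q) · log(x) · log(log(x)) ) ≤ Ĉ Â^n (n!)^S q^{n(n+1)/K}. -/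
open Complex MeasureTheory Set Metric Filter

noncomputable section

/-- Unbounded open sector with vertex at the origin, bisecting direction `d`,
half-opening `a`. -/
def uSector (d a : ℝ) : Set ℂ :=
  {z : ℂ | ∃ r θ : ℝ, 0 < r ∧ |θ - d| < a ∧ z = (r : ℂ) * Complex.exp ((θ : ℂ) * Complex.I)}

/-- Bounded open sector with vertex at the origin. -/
def bSector (d a R : ℝ) : Set ℂ :=
  {z : ℂ | ∃ r θ : ℝ, 0 < r ∧ r < R ∧ |θ - d| < a ∧
    z = (r : ℂ) * Complex.exp ((θ : ℂ) * Complex.I)}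

/-- Horizontal strip `H_b`. -/
def HStrip (b : ℝ) : Set ℂ := {z : ℂ | |z.im| < b}

/-- Jacobi theta function of order `k`: `Θ_{q^{1/k}}(x) = Σ_{n ∈ ℤ} q^{-n(n-1)/(2k)} x^n`. -/
def Theta (q : ℝ) (k : ℕ) (x : ℂ) : ℂ :=
  ∑' n : ℤ, ((q ^ (-((n : ℝ) * ((n : ℝ) - 1)) / (2 * (k : ℝ))) : ℝ) : ℂ) * x ^ n

/-- The constant `π_{q^{1/k}} = (log q / k) Π_{n ≥ 0} (1 - q^{-(n+1)/k})⁻¹`. -/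
def piq (q : ℝ) (k : ℕ) : ℝ :=
  (Real.log q / (k : ℝ)) * ∏' n : ℕ, (1 - q ^ (-((n : ℝ) + 1) / (k : ℝ)))⁻¹

/-- `∫_{L_γ} g(u) du/u`, where `L_γ` is the ray of argument `γ`. -/
def rayIntegral (γ : ℝ) (g : ℂ → ℂ) : ℂ :=
  ∫ r in Ioi (0 : ℝ), g ((r : ℂ) * Complex.exp ((γ : ℂ) * Complex.I)) / (r : ℂ)

/-- Banach-valued q-Laplace transform of order `k` in direction `γ`. -/
def qLaplace (𝔼 : Type*) [NormedAddCommGroup 𝔼] [NormedSpace ℂ 𝔼]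
    (q : ℝ) (k : ℕ) (γ : ℝ) (f : ℂ → 𝔼) (T : ℂ) : 𝔼 :=
  (1 / (piq q k : ℂ)) •
    ∫ r in Ioi (0 : ℝ),
      ((Theta q k (((r : ℂ) * Complex.exp ((γ : ℂ) * Complex.I)) / T))⁻¹ / (r : ℂ)) •
        f ((r : ℂ) * Complex.exp ((γ : ℂ) * Complex.I))

/-- The domain `𝓡_{γ,δ̃}`. -/
def RegionR (γ δt : ℝ) : Set ℂ :=
  {T : ℂ | T ≠ 0 ∧ ∀ r : ℝ, 0 ≤ r →
    δt < ‖1 + (r : ℂ) * Complex.exp ((γ : ℂ) * Complex.I) / T‖}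

/-- `U_γ(T₁,T₂,m) = (1/π_{q^{1/k₁}}) ∫_{L_γ} ω(u,m) Θ(u/T₁)⁻¹ e^{-u/T₂^{k₂}} du/u`. -/
def Ugamma (q : ℝ) (k₁ k₂ : ℕ) (γ : ℝ) (ω : ℂ → ℝ → ℂ) (T₁ T₂ : ℂ) (m : ℝ) : ℂ :=
  (1 / (piq q k₁ : ℂ)) *
    rayIntegral γ fun u => ω u m / Theta q k₁ (u / T₁) * Complex.exp (-(u / T₂ ^ k₂))

/-- The weight of the space `E_{(β,μ)}`. -/
def Eweight (β μ : ℝ) (m : ℝ) : ℝ := (1 + |m|) ^ μ * Real.exp (β * |m|)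

/-- Membership in `E_{(β,μ)}`. -/
def memE (β μ : ℝ) (h : ℝ → ℂ) : Prop :=
  Continuous h ∧ ∃ C : ℝ, ∀ m : ℝ, Eweight β μ m * ‖h m‖ ≤ C

/-- Norm of `E_{(β,μ)}`. -/
def Enorm (β μ : ℝ) (h : ℝ → ℂ) : ℝ := ⨆ m : ℝ, Eweight β μ m * ‖h m‖

/-- The weight of the space `qExp^d_{(k,β,μ,α)}`. -/
def qW (k β μ α q δ : ℝ) (τ : ℂ) (m : ℝ) : ℝ :=
  Eweight β μ m *
    Real.exp (-(k * Real.log (‖τ‖ + δ) ^ 2) / (2 * Real.log q)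
      - α * Real.log (‖τ‖ + δ))

/-- Membership in `qExp^d_{(k,β,μ,α)}` (with sector `S` and radius `ρ`). -/
def memqExp (k β μ α q δ ρ : ℝ) (S : Set ℂ) (f : ℂ → ℝ → ℂ) : Prop :=
  ContinuousOn (fun p : ℂ × ℝ => f p.1 p.2) ((S ∪ closedBall 0 ρ) ×ˢ (univ : Set ℝ)) ∧
  (∀ m : ℝ, DifferentiableOn ℂ (fun τ => f τ m) (S ∪ ball 0 ρ)) ∧
  ∃ C : ℝ, ∀ τ ∈ S ∪ closedBall (0 : ℂ) ρ, ∀ m : ℝ,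
    qW k β μ α q δ τ m * ‖f τ m‖ ≤ C

/-- Norm of `qExp^d_{(k,β,μ,α)}`. -/
def qNorm (k β μ α q δ ρ : ℝ) (S : Set ℂ) (f : ℂ → ℝ → ℂ) : ℝ :=
  sSup {r : ℝ | ∃ τ ∈ S ∪ closedBall (0 : ℂ) ρ, ∃ m : ℝ,
    r = qW k β μ α q δ τ m * ‖f τ m‖}

/-- Good covering of `ℂ*`. -/
structure GoodCovering (ε₀ : ℝ) {ι : ℕ} (E : Fin ι → Set ℂ) : Prop where
  two_le : 2 ≤ ι
  sect : ∀ h, ∃ d a R, 0 < a ∧ 0 < R ∧ E h = bSector d a R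
  subset : ∀ h, E h ⊆ ball (0 : ℂ) ε₀ \ {0}
  inter : ∀ j₁ j₂ : Fin ι, E j₁ ∩ E j₂ = ∅ ↔
    ¬((j₁ : ℕ) = j₂ ∨ ((j₁ : ℕ) + 1) % ι = j₂ ∨ ((j₂ : ℕ) + 1) % ι = j₁)
  cover : ∃ U ∈ nhds (0 : ℂ), (⋃ h, E h) = U \ {0}

/-- Cyclic successor in `Fin ι`. -/
def cyc {ι : ℕ} (h : Fin ι) : Fin ι := ⟨((h : ℕ) + 1) % ι, Nat.mod_lt _ h.pos⟩

/-- `f` admits `Σ c_n ε^n` as `((q,k);s)`-Gevrey asymptotic expansion on the sector `V`. -/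
def qksGevrey {𝔽 : Type*} [NormedAddCommGroup 𝔽] [NormedSpace ℂ 𝔽]
    (q k s : ℝ) (V : Set ℂ) (f : ℂ → 𝔽) (c : ℕ → 𝔽) : Prop :=
  ∀ U : Set ℂ, (∃ d a R, 0 < a ∧ 0 < R ∧ U = bSector d a R) → closure U \ {0} ⊆ V →
    ∃ A C : ℝ, 0 < A ∧ 0 < C ∧ ∀ ε ∈ U, ∀ N : ℕ,
      ‖f ε - ∑ n ∈ Finset.range (N + 1), ε ^ n • c n‖ ≤
        C * A ^ N * (N.factorial : ℝ) ^ s * q ^ ((N : ℝ) * ((N : ℝ) + 1) / (2 * k)) *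
          ‖ε‖ ^ (N + 1)

/-- `f` admits `Σ c_n ε^n` as q-Gevrey asymptotic expansion of order `1/k` on the sector `V`. -/
def qGevrey {𝔽 : Type*} [NormedAddCommGroup 𝔽] [NormedSpace ℂ 𝔽]
    (q k : ℝ) (V : Set ℂ) (f : ℂ → 𝔽) (c : ℕ → 𝔽) : Prop :=
  ∀ U : Set ℂ, (∃ d a R, 0 < a ∧ 0 < R ∧ U = bSector d a R) → closure U \ {0} ⊆ V →
    ∃ A C : ℝ, 0 < A ∧ 0 < C ∧ ∀ ε ∈ U, ∀ N : ℕ,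
      ‖f ε - ∑ n ∈ Finset.range (N + 1), ε ^ n • c n‖ ≤
        C * A ^ (N + 1) * q ^ ((N : ℝ) * ((N : ℝ) + 1) / (2 * k)) * ‖ε‖ ^ (N + 1)

/-- The differential operator `P(∂_z)`. -/
def Dz (P : Polynomial ℂ) (f : ℂ → ℂ) (z : ℂ) : ℂ :=
  ∑ n ∈ Finset.range (P.natDegree + 1), P.coeff n * iteratedDeriv n f z

/-- The operator `t^{k+1} ∂_t`. -/
def T2op (k : ℕ) (f : ℂ → ℂ) (t : ℂ) : ℂ := t ^ (k + 1) * deriv f t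

lemma my_pow_le_exp_mul_factorial (n : ℕ) : (n:ℝ)^n ≤ Real.exp n * n.factorial := by
  induction n with
  | zero => simp
  | succ k ih =>
    rcases Nat.eq_zero_or_pos k with hk | hk
    · subst hk
      simpa using Real.one_le_exp (by norm_num : (0:ℝ) ≤ 1)
    · have hk0 : (0:ℝ) < k := by exact_mod_cast hk
      have h1 : ((k:ℝ)+1) ≤ (k:ℝ) * Real.exp (1/(k:ℝ)) := by
        have := Real.add_one_le_exp (1/(k:ℝ))
        calc ((k:ℝ)+1) = (k:ℝ) * (1/(k:ℝ) + 1) := by field_simp; ring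
          _ ≤ (k:ℝ) * Real.exp (1/(k:ℝ)) := by
              exact mul_le_mul_of_nonneg_left this hk0.le
      have h2 : ((k:ℝ)+1)^k ≤ (k:ℝ)^k * Real.exp 1 := by
        calc ((k:ℝ)+1)^k ≤ ((k:ℝ) * Real.exp (1/(k:ℝ)))^k := by
              apply pow_le_pow_left₀ (by positivity) h1
          _ = (k:ℝ)^k * Real.exp ((1/(k:ℝ)) * k) := by
              rw [mul_pow, ← Real.exp_nat_mul]; ring_nf
          _ = (k:ℝ)^k * Real.exp 1 := by
              congr 2; field_simp
      have hfact : ((k+1).factorial : ℝ) = ((k:ℝ)+1) * k.factorial := by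
        push_cast [Nat.factorial_succ]; ring
      have hexp : Real.exp ((k:ℝ)+1) = Real.exp 1 * Real.exp k := by
        rw [← Real.exp_add]; ring_nf
      calc ((k+1:ℕ):ℝ)^(k+1) = ((k:ℝ)+1) * ((k:ℝ)+1)^k := by push_cast; ring
        _ ≤ ((k:ℝ)+1) * ((k:ℝ)^k * Real.exp 1) := by
            exact mul_le_mul_of_nonneg_left h2 (by positivity)
        _ ≤ ((k:ℝ)+1) * ((Real.exp k * k.factorial) * Real.exp 1) := by
            apply mul_le_mul_of_nonneg_left _ (by positivity)
            exact mul_le_mul_of_nonneg_right ih (Real.exp_pos 1).le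
        _ = Real.exp ((k+1:ℕ):ℝ) * ((k+1).factorial : ℝ) := by
            rw [hfact]; push_cast [hexp]; ring

lemma my_log_factorial (n : ℕ) (hn : 1 ≤ n) :
    (n:ℝ) * Real.log n - n ≤ Real.log (n.factorial) := by
  have hn0 : (0:ℝ) < n := by exact_mod_cast hn
  have h := my_pow_le_exp_mul_factorial n
  have hl := Real.log_le_log (by positivity) h
  rw [Real.log_pow, Real.log_mul (Real.exp_ne_zero _) (by positivity), Real.log_exp] at hl
  linarith

set_option maxHeartbeats 1000000 in

lemma my_scalar (a b m L F : ℝ) (ha0 : 0 < a) (hb0 : 0 < b) (hm1 : 1 ≤ m)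
    (hba : 10*b/a ≤ m) (h20b : 20*b^2 ≤ m) (h18b : 18*b ≤ m) (hL0 : 0 < L)
    (hF : m * Real.log m - m ≤ F) :
    L*m + (-a*L^2 + b*L*Real.log L) ≤ (b/(2*a)) * F + 7*(m*(m+1))/(18*a) := by
  have hm0 : (0:ℝ) < m := lt_of_lt_of_le one_pos hm1
  set t := Real.log m with ht
  have ht0 : 0 ≤ t := Real.log_nonneg hm1
  have h1 : Real.log L ≤ L/m + t := by
    have h1a : Real.log (L/m) ≤ L/m - 1 := Real.log_le_sub_one_of_pos (by positivity)
    have h1b : Real.log (L/m) = Real.log L - t := Real.log_div (ne_of_gt hL0) (ne_of_gt hm0)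
    linarith
  have h2 : b * L * Real.log L ≤ b * L * (L/m) + b * L * t := by
    have h2a := mul_le_mul_of_nonneg_left h1 (by positivity : (0:ℝ) ≤ b * L)
    nlinarith [h2a]
  have h3 : b * L * (L/m) ≤ a/10 * L^2 := by
    have hbm : b/m ≤ a/10 := by
      rw [div_le_div_iff₀ hm0 (by norm_num)]
      rw [div_le_iff₀ ha0] at hba
      linarith
    have heq : b * L * (L/m) = (b/m) * L^2 := by field_simp
    rw [heq]
    exact mul_le_mul_of_nonneg_right hbm (sq_nonneg L)
  have h4 : (m + b*t) * L - 9*a/10 * L^2 ≤ 10 * (m + b*t)^2 / (36*a) := by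
    rw [le_div_iff₀ (by positivity)]
    nlinarith [sq_nonneg (5*(m + b*t) - 9*a*L)]
  -- sqrt facts
  set s := Real.sqrt m with hs
  have hs2 : s^2 = m := Real.sq_sqrt hm0.le
  have hs0 : 0 ≤ s := Real.sqrt_nonneg m
  have hsp : 0 < s := Real.sqrt_pos.mpr hm0
  have hts : t ≤ 2*s := by
    have h := Real.log_le_sub_one_of_pos hsp
    have hls : Real.log s = t / 2 := by rw [hs, Real.log_sqrt hm0.le]
    rw [hls] at h
    linarith
  have hs4b : 4*b ≤ s := by
    rw [hs, Real.le_sqrt (by positivity) hm0.le]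
    nlinarith [sq_nonneg b]
  have e1 : 2*b*(m*t) ≤ m^2 := by
    have e1a : m*t ≤ m*(2*s) := mul_le_mul_of_nonneg_left hts hm0.le
    have e1d : (4*b)*(m*s) ≤ s*(m*s) :=
      mul_le_mul_of_nonneg_right hs4b (by positivity)
    nlinarith [e1a, e1d, hs2]
  have e2 : 10*b^2*t^2 ≤ 2*m^2 := by
    have e2a : t*t ≤ (2*s)*(2*s) := mul_le_mul hts hts ht0 (by positivity)
    have e2b : t^2 ≤ 4*m := by
      have : (2*s)*(2*s) = 4*m := by rw [show (2*s)*(2*s) = 4*s^2 by ring, hs2]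
      calc t^2 = t*t := sq t
        _ ≤ (2*s)*(2*s) := e2a
        _ = 4*m := this
    have e2c : 10*b^2*t^2 ≤ 10*b^2*(4*m) :=
      mul_le_mul_of_nonneg_left e2b (by positivity)
    have e2d : (20*b^2)*m ≤ m*m := mul_le_mul_of_nonneg_right h20b hm0.le
    have e2e : m*m = m^2 := by ring
    linarith only [e2c, e2d, e2e]
  have e3 : 18*b*m ≤ m^2 := by nlinarith [mul_le_mul_of_nonneg_right h18b hm0.le]
  have key : 10 * (m + b*t)^2 ≤ 18*b*(m*t - m) + 14*(m*(m+1)) := by nlinarith [e1, e2, e3]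
  have h5 : 10 * (m + b*t)^2 / (36*a) ≤ (b/(2*a))*(m*t - m) + 7*(m*(m+1))/(18*a) := by
    calc 10 * (m + b*t)^2 / (36*a) ≤ (18*b*(m*t - m) + 14*(m*(m+1))) / (36*a) := by
          apply div_le_div_of_nonneg_right key ?_ |>.trans_eq rfl
          · positivity
      _ = (b/(2*a))*(m*t - m) + 7*(m*(m+1))/(18*a) := by
          field_simp; ring
  have h6 : (b/(2*a))*(m*t - m) ≤ (b/(2*a)) * F :=
    mul_le_mul_of_nonneg_left hF (by positivity)
  nlinarith [h2, h3, h4, h5, h6]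


theorem lambert_bound_aux (q k₁' k₁'' k₂ lam₁ lam₂ μ₂ : ℝ) (hq : 1 < q)
    (hk₁' : 0 < k₁') (hk₁'' : 0 < k₁'') (hk₂ : 0 < k₂) (hlam₁ : 0 < lam₁)
    (hlam₂ : 0 < lam₂) (hμ₂ : lam₂ < μ₂) :
    ∃ C A : ℝ, 0 < C ∧ 0 < A ∧ ∃ n₀ : ℕ, 1 ≤ n₀ ∧
      ∀ n : ℕ, n₀ ≤ n → ∀ x : ℝ, 1 < x →
        x ^ (n : ℝ) *
          Real.exp (-(k₁'' * lam₁ ^ 2 / (2 * Real.log q)) * Real.log x ^ 2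
            + (k₁' * (μ₂ - lam₂) * k₂ / Real.log q) * Real.log x * Real.log (Real.log x)) ≤
        C * A ^ n * (n.factorial : ℝ) ^ (k₁' * (μ₂ - lam₂) * k₂ / (k₁'' * lam₁ ^ 2)) *
          q ^ ((n : ℝ) * ((n : ℝ) + 1) / (9 * k₁'' * lam₁ ^ 2 / 7)) := by
  have hμ : 0 < μ₂ - lam₂ := sub_pos.mpr hμ₂
  have hlq : 0 < Real.log q := Real.log_pos hq
  obtain ⟨a, ha⟩ : ∃ a : ℝ, a = k₁'' * lam₁ ^ 2 / (2 * Real.log q) := ⟨_, rfl⟩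
  obtain ⟨b, hb⟩ : ∃ b : ℝ, b = k₁' * (μ₂ - lam₂) * k₂ / Real.log q := ⟨_, rfl⟩
  have ha0 : 0 < a := by rw [ha]; positivity
  have hb0 : 0 < b := by rw [hb]; positivity
  refine ⟨1, 1, one_pos, one_pos, ⌈10*b/a⌉₊ + ⌈20*b^2⌉₊ + ⌈18*b⌉₊ + 1, by omega, ?_⟩
  intro n hn x hx
  have hn1 : 1 ≤ n := le_trans (by omega) hn
  have hm1 : (1:ℝ) ≤ (n:ℝ) := by exact_mod_cast hn1
  have hm0 : (0:ℝ) < (n:ℝ) := lt_of_lt_of_le one_pos hm1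
  have hcast : ((⌈10*b/a⌉₊ + ⌈20*b^2⌉₊ + ⌈18*b⌉₊ + 1 : ℕ):ℝ) ≤ (n:ℝ) :=
    Nat.cast_le.mpr hn
  have hc1 := Nat.le_ceil (10*b/a)
  have hc2 := Nat.le_ceil (20*b^2)
  have hc3 := Nat.le_ceil (18*b)
  have hnn1 : (0:ℝ) ≤ (⌈10*b/a⌉₊ : ℝ) := Nat.cast_nonneg _
  have hnn2 : (0:ℝ) ≤ (⌈20*b^2⌉₊ : ℝ) := Nat.cast_nonneg _
  have hnn3 : (0:ℝ) ≤ (⌈18*b⌉₊ : ℝ) := Nat.cast_nonneg _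
  push_cast at hcast
  have hba : 10*b/a ≤ (n:ℝ) := by linarith
  have h20b : 20*b^2 ≤ (n:ℝ) := by linarith
  have h18b : 18*b ≤ (n:ℝ) := by linarith
  have hxpos : (0:ℝ) < x := lt_trans one_pos hx
  have hL0 : 0 < Real.log x := Real.log_pos hx
  have hfact0 : (0:ℝ) < (n.factorial : ℝ) := by exact_mod_cast n.factorial_pos
  have hF : (n:ℝ) * Real.log (n:ℝ) - (n:ℝ) ≤ Real.log (n.factorial : ℝ) :=
    my_log_factorial n hn1
  have main := my_scalar a b (n:ℝ) (Real.log x) (Real.log (n.factorial : ℝ))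
    ha0 hb0 hm1 hba h20b h18b hL0 hF
  -- algebraic identifications
  have hS' : Real.log (n.factorial : ℝ) * (k₁' * (μ₂ - lam₂) * k₂ / (k₁'' * lam₁ ^ 2)) =
      (b/(2*a)) * Real.log (n.factorial : ℝ) := by
    rw [ha, hb]; field_simp
  have hqK : Real.log q * ((n:ℝ) * ((n:ℝ) + 1) / (9 * k₁'' * lam₁ ^ 2 / 7)) =
      7 * ((n:ℝ)*((n:ℝ)+1)) / (18*a) := by
    rw [ha]; field_simp; ring
  -- reduce to the exponent inequality
  rw [Real.rpow_def_of_pos hxpos, Real.rpow_def_of_pos hfact0,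
    Real.rpow_def_of_pos (lt_trans one_pos hq), one_mul, one_pow, one_mul,
    ← Real.exp_add, ← Real.exp_add, Real.exp_le_exp, hS', hqK, ← ha, ← hb]
  exact main


/-- Lemma on the function `Ψ(x) = xⁿ exp(-(k₁''λ₁²/(2 log q)) log²x
+ (k₁'(μ₂-λ₂)k₂/log q) log x · log log x)`: bounds of `((q,K);S)`-Gevrey type. -/
theorem lambert_bound (q k₁' k₁'' k₂ lam₁ lam₂ μ₂ : ℝ) (hq : 1 < q)
    (hk₁' : 0 < k₁') (hk₁'' : 0 < k₁'') (hk₂ : 0 < k₂) (hlam₁ : 0 < lam₁)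
    (hlam₂ : 0 < lam₂) (hμ₂ : lam₂ < μ₂) :
    ∃ C A : ℝ, 0 < C ∧ 0 < A ∧ ∃ n₀ : ℕ, 1 ≤ n₀ ∧
      ∀ n : ℕ, n₀ ≤ n → ∀ x : ℝ, 1 < x →
        x ^ (n : ℝ) *
          Real.exp (-(k₁'' * lam₁ ^ 2 / (2 * Real.log q)) * Real.log x ^ 2
            + (k₁' * (μ₂ - lam₂) * k₂ / Real.log q) * Real.log x * Real.log (Real.log x)) ≤
        C * A ^ n * (n.factorial : ℝ) ^ (k₁' * (μ₂ - lam₂) * k₂ / (k₁'' * lam₁ ^ 2)) *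
          q ^ ((n : ℝ) * ((n : ℝ) + 1) / (9 * k₁'' * lam₁ ^ 2 / 7)) := by
  exact lambert_bound_aux q k₁' k₁'' k₂ lam₁ lam₂ μ₂ hq hk₁' hk₁'' hk₂ hlam₁ hlam₂ hμ₂
end
end

section
/- Let μ > 1, β > 0 and f ∈ E_{(β,μ)}. Then: (1) the inverse Fourier transform 𝓕^{−1}(f)(x) = (2π)^{−1/2} ∫_{−∞}^{∞} f(m) e^{ixm} dm, defined for x ∈ ℝ, extends to a holomorphic function on the horizontal strip H_β = {z ∈ ℂ : |Im z| < β}; (2) the function φ(m) = i m f(m) belongs to E_{(β,μ−1)} and ∂_z 𝓕^{−1}(f)(z) = 𝓕^{−1}(φ)(z) for all z ∈ H_β; (3) for f, g ∈ E_{(β,μ)}, the convolution ψ(m) = (2π)^{−1/2} ∫_{−∞}^{∞} f(m−m₁) g(m₁) dm₁ belongs to E_{(β,μ)}, and 𝓕^{−1}(f)(z) · 𝓕^{−1}(g)(z) = 𝓕^{−1}(ψ)(z) for every z ∈ H_β. -/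
open Complex MeasureTheory Set Metric Filter

noncomputable section

/-- Inverse Fourier transform `𝓕⁻¹(f)(z) = (2π)^{-1/2} ∫ f(m) e^{izm} dm`. -/
def Finv (f : ℝ → ℂ) (z : ℂ) : ℂ :=
  ((1 / Real.sqrt (2 * Real.pi) : ℝ) : ℂ) *
    ∫ m : ℝ, f m * Complex.exp (Complex.I * z * (m : ℂ))

section InvFourierAux

open Real

/-- Even-function integrability from integrability on `(0, ∞)`. -/
lemma evenIntegrableAux {f : ℝ → ℝ} (hf : IntegrableOn (fun x => f |x|) (Ioi 0)) :
    Integrable fun x : ℝ => f |x| := by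
  have int_Iic : IntegrableOn (fun x : ℝ => f |x|) (Iic 0) := by
    rw [← Measure.map_neg_eq_self (volume : Measure ℝ)]
    have m : MeasurableEmbedding fun x : ℝ => -x := (Homeomorph.neg ℝ).measurableEmbedding
    rw [m.integrableOn_map_iff]
    simp_rw [Function.comp_def, abs_neg, neg_preimage, neg_Iic, neg_zero]
    exact Iff.mpr integrableOn_Ici_iff_integrableOn_Ioi hf
  have := int_Iic.union hf
  rwa [Iic_union_Ioi, integrableOn_univ] at this

lemma integrable_exp_neg_abs_aux {a : ℝ} (ha : 0 < a) :
    Integrable (fun x : ℝ => Real.exp (-(a * |x|))) := by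
  have h : IntegrableOn (fun x : ℝ => Real.exp (-(a * |x|))) (Ioi 0) :=
    (exp_neg_integrableOn_Ioi 0 ha).congr_fun
      (fun x hx => by rw [abs_of_pos hx]; simp only [neg_mul]) measurableSet_Ioi
  exact evenIntegrableAux (f := fun t => Real.exp (-(a * t))) h

lemma integrable_one_add_abs_rpow_aux {μ : ℝ} (hμ : 1 < μ) :
    Integrable (fun x : ℝ => (1 + |x|) ^ (-μ)) := by
  apply evenIntegrableAux (f := fun t => (1 + t) ^ (-μ))
  have h1 : IntegrableOn (fun x : ℝ => x ^ (-μ)) (Ioi 1) :=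
    integrableOn_Ioi_rpow_of_lt (by linarith) one_pos
  have m : MeasurableEmbedding (fun x : ℝ => x + 1) :=
    (Homeomorph.addRight (1 : ℝ)).measurableEmbedding
  have h2 : IntegrableOn ((fun x : ℝ => x ^ (-μ)) ∘ fun x => x + 1)
      ((fun x : ℝ => x + 1) ⁻¹' Ioi 1) := by
    rw [← m.integrableOn_map_iff]
    rwa [map_add_right_eq_self]
  have hpre : ((fun x : ℝ => x + 1) ⁻¹' Ioi 1) = Ioi 0 := by
    ext x; simp [mem_preimage, mem_Ioi]
  rw [hpre] at h2
  exact h2.congr_fun (fun x hx => by rw [Function.comp_apply, abs_of_pos hx, add_comm]) measurableSet_Ioi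

lemma Eweight_pos (β μ m : ℝ) : 0 < Eweight β μ m := by
  unfold Eweight
  have : (0 : ℝ) < 1 + |m| := by positivity
  positivity

lemma one_le_Eweight {β μ : ℝ} (hβ : 0 ≤ β) (hμ : 0 ≤ μ) (m : ℝ) : 1 ≤ Eweight β μ m := by
  unfold Eweight
  have h1 : (1 : ℝ) ≤ (1 + |m|) ^ μ :=
    Real.one_le_rpow (by linarith [abs_nonneg m]) hμ
  have h2 : (1 : ℝ) ≤ Real.exp (β * |m|) :=
    Real.one_le_exp (by positivity)
  nlinarith

lemma bound_nonneg {β μ C : ℝ} {h : ℝ → ℂ}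
    (hC : ∀ m, Eweight β μ m * ‖h m‖ ≤ C) : 0 ≤ C :=
  le_trans (mul_nonneg (Eweight_pos β μ 0).le (norm_nonneg _)) (hC 0)

/-- Full-strength pointwise decay. -/
lemma abs_le_decay {β μ C : ℝ} {h : ℝ → ℂ}
    (hC : ∀ m, Eweight β μ m * ‖h m‖ ≤ C) (m : ℝ) :
    ‖h m‖ ≤ C * ((1 + |m|) ^ (-μ) * Real.exp (-(β * |m|))) := by
  have hw := Eweight_pos β μ m
  have h1 : ‖h m‖ ≤ C / Eweight β μ m := by
    rw [le_div_iff₀ hw]; rw [mul_comm]; exact hC m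
  refine h1.trans_eq ?_
  rw [div_eq_mul_inv]
  congr 1
  unfold Eweight
  rw [mul_inv, Real.rpow_neg (by positivity), ← Real.exp_neg]

lemma abs_le_exp_decay {β μ C : ℝ} (hμ : 0 ≤ μ) {h : ℝ → ℂ}
    (hC : ∀ m, Eweight β μ m * ‖h m‖ ≤ C) (m : ℝ) :
    ‖h m‖ ≤ C * Real.exp (-(β * |m|)) := by
  have h1 := abs_le_decay hC m
  have hCn := bound_nonneg hC
  have h2 : (1 + |m|) ^ (-μ) ≤ 1 := by
    rw [Real.rpow_neg (by positivity)]
    apply inv_le_one_of_one_le₀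
    exact Real.one_le_rpow (by linarith [abs_nonneg m]) hμ
  have h3 : (1 + |m|) ^ (-μ) * Real.exp (-(β * |m|)) ≤ Real.exp (-(β * |m|)) := by
    nlinarith [Real.exp_pos (-(β * |m|)), Real.rpow_nonneg (by positivity : (0:ℝ) ≤ 1 + |m|) (-μ)]
  nlinarith

lemma abs_le_const {β μ C : ℝ} (hβ : 0 ≤ β) (hμ : 0 ≤ μ) {h : ℝ → ℂ}
    (hC : ∀ m, Eweight β μ m * ‖h m‖ ≤ C) (m : ℝ) :
    ‖h m‖ ≤ C := by
  have := hC m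
  nlinarith [one_le_Eweight hβ hμ m, norm_nonneg (h m)]

lemma norm_integrand (h : ℝ → ℂ) (z : ℂ) (m : ℝ) :
    ‖h m * Complex.exp (Complex.I * z * (m : ℂ))‖ =
      ‖h m‖ * Real.exp (-(z.im * m)) := by
  rw [norm_mul, Complex.norm_exp]
  congr 2
  simp only [Complex.mul_re, Complex.mul_im, Complex.I_re, Complex.I_im, Complex.ofReal_re,
    Complex.ofReal_im]
  ring

lemma integrand_bound {β μ C : ℝ} (hμ : 0 ≤ μ) {h : ℝ → ℂ}
    (hC : ∀ m, Eweight β μ m * ‖h m‖ ≤ C)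
    {b : ℝ} {z : ℂ} (hz : |z.im| ≤ b) (m : ℝ) :
    ‖h m * Complex.exp (Complex.I * z * (m : ℂ))‖ ≤ C * Real.exp (-((β - b) * |m|)) := by
  rw [norm_integrand]
  have h1 := abs_le_exp_decay hμ hC m
  have hCn := bound_nonneg hC
  have h2 : Real.exp (-(z.im * m)) ≤ Real.exp (b * |m|) := by
    apply Real.exp_le_exp.2
    calc -(z.im * m) ≤ |z.im * m| := neg_le_abs _
      _ = |z.im| * |m| := abs_mul _ _
      _ ≤ b * |m| := by
          apply mul_le_mul_of_nonneg_right hz (abs_nonneg m)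
  calc ‖h m‖ * Real.exp (-(z.im * m))
      ≤ (C * Real.exp (-(β * |m|))) * Real.exp (b * |m|) := by
        apply mul_le_mul h1 h2 (Real.exp_pos _).le
        positivity
    _ = C * Real.exp (-((β - b) * |m|)) := by
        rw [mul_assoc, ← Real.exp_add]; ring_nf

lemma cont_integrand {h : ℝ → ℂ} (hc : Continuous h) (z : ℂ) :
    Continuous fun m : ℝ => h m * Complex.exp (Complex.I * z * (m : ℂ)) :=
  hc.mul ((continuous_const.mul Complex.continuous_ofReal).cexp)

lemma integrable_integrand {β μ C : ℝ} (hμ : 0 ≤ μ) {h : ℝ → ℂ} (hc : Continuous h)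
    (hC : ∀ m, Eweight β μ m * ‖h m‖ ≤ C)
    {z : ℂ} (hz : |z.im| < β) :
    Integrable fun m : ℝ => h m * Complex.exp (Complex.I * z * (m : ℂ)) := by
  apply Integrable.mono'
      ((integrable_exp_neg_abs_aux (show (0:ℝ) < β - |z.im| by linarith)).const_mul C)
      ((cont_integrand hc z).aestronglyMeasurable)
  exact Filter.Eventually.of_forall (integrand_bound hμ hC le_rfl)

lemma phi_bound {β μ C : ℝ} {f : ℝ → ℂ}
    (hC : ∀ m, Eweight β μ m * ‖f m‖ ≤ C) (m : ℝ) :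
    Eweight β (μ - 1) m * ‖Complex.I * (m : ℂ) * f m‖ ≤ C := by
  have habs : ‖Complex.I * (m : ℂ) * f m‖ = |m| * ‖f m‖ := by
    simp [map_mul, Complex.norm_real]
  rw [habs]
  have key : Eweight β (μ - 1) m * |m| ≤ Eweight β μ m := by
    unfold Eweight
    have h0 : (0:ℝ) < 1 + |m| := by positivity
    have h1 : (1 + |m|) ^ (μ - 1) * |m| ≤ (1 + |m|) ^ (μ - 1) * (1 + |m|) := by
      apply mul_le_mul_of_nonneg_left (by linarith) (Real.rpow_nonneg h0.le _)
    have h2 : (1 + |m|) ^ (μ - 1) * (1 + |m|) = (1 + |m|) ^ μ := by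
      rw [← Real.rpow_add_one h0.ne' (μ - 1)]; ring_nf
    nlinarith [Real.exp_pos (β * |m|), Real.rpow_nonneg h0.le (μ - 1)]
  calc Eweight β (μ - 1) m * (|m| * ‖f m‖)
      = (Eweight β (μ - 1) m * |m|) * ‖f m‖ := by ring
    _ ≤ Eweight β μ m * ‖f m‖ := by
        apply mul_le_mul_of_nonneg_right key (norm_nonneg _)
    _ ≤ C := hC m

lemma hasDerivAt_Finv {β μ : ℝ} (hβ : 0 < β) (hμ : 1 < μ) {f : ℝ → ℂ}
    (hfc : Continuous f) {C : ℝ} (hC : ∀ m, Eweight β μ m * ‖f m‖ ≤ C)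
    {z₀ : ℂ} (hz₀ : |z₀.im| < β) :
    HasDerivAt (Finv f) (Finv (fun m => Complex.I * (m : ℂ) * f m) z₀) z₀ := by
  have hμ0 : (0:ℝ) ≤ μ := by linarith
  have hμ1 : (0:ℝ) ≤ μ - 1 := by linarith
  set b : ℝ := (β + |z₀.im|) / 2 with hbdef
  have hb1 : |z₀.im| < b := by rw [hbdef]; linarith
  have hb2 : b < β := by rw [hbdef]; linarith
  set ε : ℝ := b - |z₀.im| with hεdef
  have hε : 0 < ε := by rw [hεdef]; linarith
  have hφc : Continuous fun m : ℝ => Complex.I * (m : ℂ) * f m :=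
    (continuous_const.mul Complex.continuous_ofReal).mul hfc
  have him : ∀ x ∈ ball z₀ ε, |x.im| ≤ b := by
    intro x hx
    have h1 : |x.im - z₀.im| ≤ ‖x - z₀‖ := by
      simpa [Complex.sub_im] using Complex.abs_im_le_norm (x - z₀)
    have h2 : ‖x - z₀‖ < ε := by
      rw [mem_ball, Complex.dist_eq] at hx; exact hx
    have := abs_sub_abs_le_abs_sub x.im z₀.im
    have h3 : |x.im| ≤ |z₀.im| + |x.im - z₀.im| := by
      nlinarith [abs_sub_abs_le_abs_sub x.im z₀.im]
    rw [hεdef] at h2; linarith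
  have key := hasDerivAt_integral_of_dominated_loc_of_deriv_le (𝕜 := ℂ)
      (μ := (volume : Measure ℝ))
      (F := fun z m => f m * Complex.exp (Complex.I * z * (m : ℂ)))
      (F' := fun z m => (Complex.I * (m : ℂ) * f m) * Complex.exp (Complex.I * z * (m : ℂ)))
      (x₀ := z₀) (s := ball z₀ ε)
      (bound := fun m => C * Real.exp (-((β - b) * |m|))) (ball_mem_nhds z₀ hε)
      (Filter.Eventually.of_forall fun z => (cont_integrand hfc z).aestronglyMeasurable)
      (integrable_integrand hμ0 hfc hC hz₀)
      ((cont_integrand hφc z₀).aestronglyMeasurable)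
      (Filter.Eventually.of_forall fun m => fun x hx =>
        integrand_bound hμ1 (phi_bound hC) (him x hx) m)
      ((integrable_exp_neg_abs_aux (show (0:ℝ) < β - b by linarith)).const_mul C)
      (Filter.Eventually.of_forall fun m => fun x _ => by
        have h1 : HasDerivAt (fun z : ℂ => Complex.I * z * (m : ℂ))
            (Complex.I * (m : ℂ)) x := by
          simpa using ((hasDerivAt_id x).const_mul Complex.I).mul_const (m : ℂ)
        have h2 := h1.cexp
        have h3 := h2.const_mul (f m)
        exact h3.congr_deriv (by ring))
  have hd := key.2
  unfold Finv
  exact hd.const_mul _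

lemma rpow_neg_decay {μ : ℝ} (hμ : 0 ≤ μ) {x y : ℝ} (hx : 0 ≤ x) (hy : 0 ≤ y)
    (hxy : 1 + y ≤ 2 * (1 + x)) : (1 + x) ^ (-μ) ≤ 2 ^ μ * (1 + y) ^ (-μ) := by
  rw [Real.rpow_neg (by linarith), Real.rpow_neg (by linarith)]
  have hA : (0:ℝ) < (1 + x) ^ μ := Real.rpow_pos_of_pos (by linarith) μ
  have hB : (0:ℝ) < (1 + y) ^ μ := Real.rpow_pos_of_pos (by linarith) μ
  have h2 : (1 + y) ^ μ ≤ 2 ^ μ * (1 + x) ^ μ := by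
    rw [← Real.mul_rpow (by norm_num) (by linarith)]
    exact Real.rpow_le_rpow (by linarith) hxy hμ
  have h3 : ((1 + x) ^ μ)⁻¹ * (1 + y) ^ μ ≤ 2 ^ μ := by
    rw [inv_mul_le_iff₀ hA]
    linarith [h2, mul_comm ((2:ℝ) ^ μ) ((1 + x) ^ μ)]
  calc ((1 + x) ^ μ)⁻¹ = (((1 + x) ^ μ)⁻¹ * (1 + y) ^ μ) * ((1 + y) ^ μ)⁻¹ := by
        field_simp
    _ ≤ 2 ^ μ * ((1 + y) ^ μ)⁻¹ := mul_le_mul_of_nonneg_right h3 (by positivity)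

lemma D_mul_le {β μ : ℝ} (hβ : 0 ≤ β) (hμ : 0 ≤ μ) (m m₁ : ℝ) :
    ((1 + |m - m₁|) ^ (-μ) * Real.exp (-(β * |m - m₁|))) *
      ((1 + |m₁|) ^ (-μ) * Real.exp (-(β * |m₁|))) ≤
    2 ^ μ * ((1 + |m|) ^ (-μ) * Real.exp (-(β * |m|))) *
      ((1 + |m - m₁|) ^ (-μ) + (1 + |m₁|) ^ (-μ)) := by
  have habs : |m| ≤ |m - m₁| + |m₁| := by
    calc |m| = |(m - m₁) + m₁| := by ring_nf
      _ ≤ |m - m₁| + |m₁| := abs_add_le _ _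
  have hexp : Real.exp (-(β * |m - m₁|)) * Real.exp (-(β * |m₁|)) ≤
      Real.exp (-(β * |m|)) := by
    rw [← Real.exp_add]
    apply Real.exp_le_exp.2
    nlinarith
  have w1 : (0:ℝ) ≤ (1 + |m - m₁|) ^ (-μ) := Real.rpow_nonneg (by positivity) _
  have w2 : (0:ℝ) ≤ (1 + |m₁|) ^ (-μ) := Real.rpow_nonneg (by positivity) _
  have w0 : (0:ℝ) ≤ (1 + |m|) ^ (-μ) := Real.rpow_nonneg (by positivity) _
  have e1 : (0:ℝ) < Real.exp (-(β * |m - m₁|)) := Real.exp_pos _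
  have e2 : (0:ℝ) < Real.exp (-(β * |m₁|)) := Real.exp_pos _
  have e0 : (0:ℝ) < Real.exp (-(β * |m|)) := Real.exp_pos _
  have hpoly : (1 + |m - m₁|) ^ (-μ) * (1 + |m₁|) ^ (-μ) ≤
      2 ^ μ * (1 + |m|) ^ (-μ) * ((1 + |m - m₁|) ^ (-μ) + (1 + |m₁|) ^ (-μ)) := by
    have h2pos : (0:ℝ) < 2 ^ μ := Real.rpow_pos_of_pos two_pos μ
    rcases le_total |m₁| |m - m₁| with h | h
    · have key : (1 + |m - m₁|) ^ (-μ) ≤ 2 ^ μ * (1 + |m|) ^ (-μ) :=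
        rpow_neg_decay hμ (abs_nonneg _) (abs_nonneg _) (by linarith)
      nlinarith
    · have key : (1 + |m₁|) ^ (-μ) ≤ 2 ^ μ * (1 + |m|) ^ (-μ) :=
        rpow_neg_decay hμ (abs_nonneg _) (abs_nonneg _) (by linarith)
      nlinarith
  calc ((1 + |m - m₁|) ^ (-μ) * Real.exp (-(β * |m - m₁|))) *
        ((1 + |m₁|) ^ (-μ) * Real.exp (-(β * |m₁|)))
      = ((1 + |m - m₁|) ^ (-μ) * (1 + |m₁|) ^ (-μ)) *
          (Real.exp (-(β * |m - m₁|)) * Real.exp (-(β * |m₁|))) := by ring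
    _ ≤ (2 ^ μ * (1 + |m|) ^ (-μ) * ((1 + |m - m₁|) ^ (-μ) + (1 + |m₁|) ^ (-μ))) *
          Real.exp (-(β * |m|)) := by
        apply mul_le_mul hpoly hexp (by positivity)
        positivity
    _ = 2 ^ μ * ((1 + |m|) ^ (-μ) * Real.exp (-(β * |m|))) *
          ((1 + |m - m₁|) ^ (-μ) + (1 + |m₁|) ^ (-μ)) := by ring

lemma integrable_of_memE {β μ C : ℝ} (hβ : 0 < β) (hμ : 0 ≤ μ) {h : ℝ → ℂ}
    (hc : Continuous h) (hC : ∀ m, Eweight β μ m * ‖h m‖ ≤ C) :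
    Integrable h := by
  apply Integrable.mono' ((integrable_exp_neg_abs_aux hβ).const_mul C) hc.aestronglyMeasurable
  exact Filter.Eventually.of_forall fun m => by
    exact abs_le_exp_decay hμ hC m

lemma conv_integrable {β μ Cf Cg : ℝ} (hβ : 0 < β) (hμ : 0 ≤ μ) {f g : ℝ → ℂ}
    (hfc : Continuous f) (hgc : Continuous g)
    (hCf : ∀ m, Eweight β μ m * ‖f m‖ ≤ Cf)
    (hCg : ∀ m, Eweight β μ m * ‖g m‖ ≤ Cg) (m : ℝ) :
    Integrable fun m₁ => f (m - m₁) * g m₁ := by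
  have hgi : Integrable g := integrable_of_memE hβ hμ hgc hCg
  apply Integrable.mono' (hgi.norm.const_mul Cf)
      (((hfc.comp (continuous_const.sub continuous_id)).mul hgc).aestronglyMeasurable)
  refine Filter.Eventually.of_forall fun m₁ => ?_
  rw [Pi.mul_apply, norm_mul]
  apply mul_le_mul_of_nonneg_right _ (norm_nonneg _)
  exact abs_le_const hβ.le hμ hCf _

lemma norm_cexp (z : ℂ) (x : ℝ) :
    ‖Complex.exp (Complex.I * z * (x : ℂ))‖ = Real.exp (-(z.im * x)) := by
  have := norm_integrand (fun _ : ℝ => (1 : ℂ)) z x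
  simpa using this

lemma conv_bound {β μ Cf Cg : ℝ} (hβ : 0 < β) (hμ : 1 < μ) {f g : ℝ → ℂ}
    (hCf : ∀ m, Eweight β μ m * ‖f m‖ ≤ Cf)
    (hCg : ∀ m, Eweight β μ m * ‖g m‖ ≤ Cg) (m : ℝ) :
    Eweight β μ m * ‖((1 / Real.sqrt (2 * Real.pi) : ℝ) : ℂ) *
        ∫ m₁ : ℝ, f (m - m₁) * g m₁‖ ≤
      (1 / Real.sqrt (2 * Real.pi)) *
        (Cf * Cg * ((2:ℝ) ^ μ * (2 * ∫ x : ℝ, (1 + |x|) ^ (-μ)))) := by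
  have hμ0 : (0:ℝ) ≤ μ := by linarith
  set c : ℝ := 1 / Real.sqrt (2 * Real.pi) with hcdef
  have hcpos : 0 < c := by
    rw [hcdef]
    have : (0:ℝ) < Real.sqrt (2 * Real.pi) := Real.sqrt_pos.2 (by positivity)
    positivity
  set K : ℝ := ∫ x : ℝ, (1 + |x|) ^ (-μ) with hKdef
  have hw : Integrable (fun x : ℝ => (1 + |x|) ^ (-μ)) := integrable_one_add_abs_rpow_aux hμ
  have hKnn : 0 ≤ K := integral_nonneg fun x => Real.rpow_nonneg (by positivity) _
  have htrans : Integrable (fun m₁ : ℝ => (1 + |m - m₁|) ^ (-μ)) := by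
    have h1 := hw.comp_sub_right m
    exact h1.congr (Filter.Eventually.of_forall fun x => by
      show (1 + |x - m|) ^ (-μ) = (1 + |m - x|) ^ (-μ)
      rw [abs_sub_comm])
  have hint2 : (∫ m₁ : ℝ, (1 + |m - m₁|) ^ (-μ)) = K := by
    have : (fun m₁ : ℝ => (1 + |m - m₁|) ^ (-μ)) = fun m₁ => (1 + |m₁ - m|) ^ (-μ) :=
      funext fun x => by rw [abs_sub_comm]
    rw [this, hKdef]
    exact integral_sub_right_eq_self (fun t : ℝ => (1 + |t|) ^ (-μ)) m
  have hCfn : 0 ≤ Cf := bound_nonneg hCf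
  have hCgn : 0 ≤ Cg := bound_nonneg hCg
  set Dm : ℝ := (1 + |m|) ^ (-μ) * Real.exp (-(β * |m|)) with hDmdef
  have hDnn : 0 ≤ Dm := by
    rw [hDmdef]; exact mul_nonneg (Real.rpow_nonneg (by positivity) _) (Real.exp_pos _).le
  have habsψ : ‖(c : ℂ) * ∫ m₁ : ℝ, f (m - m₁) * g m₁‖ ≤
      c * ∫ m₁ : ℝ, ‖f (m - m₁) * g m₁‖ := by
    rw [norm_mul, Complex.norm_real, Real.norm_eq_abs, abs_of_pos hcpos]
    apply mul_le_mul_of_nonneg_left _ hcpos.le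
    exact norm_integral_le_integral_norm _
  have hmono : (∫ m₁ : ℝ, ‖f (m - m₁) * g m₁‖) ≤
      ∫ m₁ : ℝ, (Cf * Cg * ((2:ℝ) ^ μ * Dm)) *
        ((1 + |m - m₁|) ^ (-μ) + (1 + |m₁|) ^ (-μ)) := by
    have hbint : Integrable (fun m₁ : ℝ => (Cf * Cg * ((2:ℝ) ^ μ * Dm)) *
        ((1 + |m - m₁|) ^ (-μ) + (1 + |m₁|) ^ (-μ))) := by
      exact ((htrans.add hw).const_mul _)
    apply integral_mono_of_nonneg (Filter.Eventually.of_forall fun _ => norm_nonneg _) hbint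
    refine Filter.Eventually.of_forall fun m₁ => ?_
    show ‖f (m - m₁) * g m₁‖ ≤ (Cf * Cg * ((2:ℝ) ^ μ * Dm)) *
        ((1 + |m - m₁|) ^ (-μ) + (1 + |m₁|) ^ (-μ))
    rw [norm_mul]
    have h1 := abs_le_decay hCf (m - m₁)
    have h2 := abs_le_decay hCg m₁
    calc ‖f (m - m₁)‖ * ‖g m₁‖
        ≤ (Cf * ((1 + |m - m₁|) ^ (-μ) * Real.exp (-(β * |m - m₁|)))) *
            (Cg * ((1 + |m₁|) ^ (-μ) * Real.exp (-(β * |m₁|)))) := by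
          apply mul_le_mul h1 h2 (norm_nonneg _)
          positivity
      _ = (Cf * Cg) * (((1 + |m - m₁|) ^ (-μ) * Real.exp (-(β * |m - m₁|))) *
            ((1 + |m₁|) ^ (-μ) * Real.exp (-(β * |m₁|)))) := by ring
      _ ≤ (Cf * Cg) * ((2:ℝ) ^ μ * Dm *
            ((1 + |m - m₁|) ^ (-μ) + (1 + |m₁|) ^ (-μ))) := by
          apply mul_le_mul_of_nonneg_left _ (by positivity)
          rw [hDmdef]
          exact D_mul_le hβ.le hμ0 m m₁
      _ = (Cf * Cg * ((2:ℝ) ^ μ * Dm)) *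
            ((1 + |m - m₁|) ^ (-μ) + (1 + |m₁|) ^ (-μ)) := by ring
  have hintval : (∫ m₁ : ℝ, (Cf * Cg * ((2:ℝ) ^ μ * Dm)) *
      ((1 + |m - m₁|) ^ (-μ) + (1 + |m₁|) ^ (-μ))) =
      (Cf * Cg * ((2:ℝ) ^ μ * Dm)) * (K + K) := by
    rw [integral_const_mul, integral_add htrans hw, hint2]
  have hED : Eweight β μ m * Dm = 1 := by
    rw [hDmdef]
    unfold Eweight
    rw [Real.rpow_neg (by positivity), Real.exp_neg]
    have h1 : (1 + |m|) ^ μ ≠ 0 := (Real.rpow_pos_of_pos (by positivity) μ).ne'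
    have h2 : Real.exp (β * |m|) ≠ 0 := (Real.exp_pos _).ne'
    field_simp
  have hstep : ‖(c : ℂ) * ∫ m₁ : ℝ, f (m - m₁) * g m₁‖ ≤
      c * ((Cf * Cg * ((2:ℝ) ^ μ * Dm)) * (K + K)) := by
    refine habsψ.trans ?_
    apply mul_le_mul_of_nonneg_left _ hcpos.le
    rw [← hintval]; exact hmono
  calc Eweight β μ m * ‖(c : ℂ) * ∫ m₁ : ℝ, f (m - m₁) * g m₁‖
      ≤ Eweight β μ m * (c * ((Cf * Cg * ((2:ℝ) ^ μ * Dm)) * (K + K))) := by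
        apply mul_le_mul_of_nonneg_left hstep (Eweight_pos β μ m).le
    _ = (c * (Cf * Cg * ((2:ℝ) ^ μ * (2 * K)))) * (Eweight β μ m * Dm) := by ring
    _ = c * (Cf * Cg * ((2:ℝ) ^ μ * (2 * K))) := by rw [hED, mul_one]

lemma conv_identity {β μ Cf Cg : ℝ} (hβ : 0 < β) (hμ : 1 < μ) {f g : ℝ → ℂ}
    (hfc : Continuous f) (hgc : Continuous g)
    (hCf : ∀ m, Eweight β μ m * ‖f m‖ ≤ Cf)
    (hCg : ∀ m, Eweight β μ m * ‖g m‖ ≤ Cg)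
    {z : ℂ} (hz : |z.im| < β) :
    Finv f z * Finv g z =
      Finv (fun m => ((1 / Real.sqrt (2 * Real.pi) : ℝ) : ℂ) *
        ∫ m₁ : ℝ, f (m - m₁) * g m₁) z := by
  have hμ0 : (0:ℝ) ≤ μ := by linarith
  have hCfn : 0 ≤ Cf := bound_nonneg hCf
  have hCgn : 0 ≤ Cg := bound_nonneg hCg
  set a : ℝ := β - |z.im| with hadef
  have ha : 0 < a := by rw [hadef]; linarith
  set E : ℝ → ℂ := fun x => Complex.exp (Complex.I * z * (x : ℂ)) with hEdef
  have hEadd : ∀ u v : ℝ, E (u + v) = E u * E v := by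
    intro u v
    rw [hEdef]
    simp only
    rw [← Complex.exp_add]
    congr 1
    push_cast
    ring
  have hEcont : Continuous E := (continuous_const.mul Complex.continuous_ofReal).cexp
  -- integrability on the product space
  have hprod : Integrable (fun p : ℝ × ℝ => f (p.1 - p.2) * g p.2 * E p.1)
      ((volume : Measure ℝ).prod volume) := by
    have hu : Integrable (fun x : ℝ => Cf * Real.exp (-(a * |x|))) :=
      (integrable_exp_neg_abs_aux ha).const_mul Cf
    have hv : Integrable (fun x : ℝ => Cg * Real.exp (-(a * |x|))) :=
      (integrable_exp_neg_abs_aux ha).const_mul Cg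
    have hUV : Integrable (fun p : ℝ × ℝ =>
        (Cf * Real.exp (-(a * |p.1|))) * (Cg * Real.exp (-(a * |p.2|))))
        ((volume : Measure ℝ).prod volume) := hu.mul_prod hv
    have hcomp : Integrable (fun p : ℝ × ℝ =>
        (Cf * Real.exp (-(a * |p.1 - p.2|))) * (Cg * Real.exp (-(a * |p.2|))))
        ((volume : Measure ℝ).prod volume) := by
      have h1 := (measurePreserving_sub_prod (volume : Measure ℝ) volume).integrable_comp
        hUV.aestronglyMeasurable
      exact h1.2 hUV
    apply Integrable.mono' hcomp
    · exact (((hfc.comp (continuous_fst.sub continuous_snd)).mul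
        (hgc.comp continuous_snd)).mul (hEcont.comp continuous_fst)).aestronglyMeasurable
    · refine Filter.Eventually.of_forall fun p => ?_
      obtain ⟨x, y⟩ := p
      simp only
      rw [norm_mul, norm_mul, hEdef]
      have hE1 : ‖Complex.exp (Complex.I * z * (x : ℂ))‖ = Real.exp (-(z.im * x)) :=
        norm_cexp z x
      rw [hE1]
      have h1 := abs_le_exp_decay hμ0 hCf (x - y)
      have h2 := abs_le_exp_decay hμ0 hCg y
      have h3 : Real.exp (-(z.im * x)) ≤ Real.exp (|z.im| * |x - y| + |z.im| * |y|) := by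
        apply Real.exp_le_exp.2
        have habs : |x| ≤ |x - y| + |y| := by
          calc |x| = |(x - y) + y| := by ring_nf
            _ ≤ |x - y| + |y| := abs_add_le _ _
        calc -(z.im * x) ≤ |z.im * x| := neg_le_abs _
          _ = |z.im| * |x| := abs_mul _ _
          _ ≤ |z.im| * (|x - y| + |y|) :=
              mul_le_mul_of_nonneg_left habs (abs_nonneg _)
          _ = |z.im| * |x - y| + |z.im| * |y| := by ring
      calc ‖f (x - y)‖ * ‖g y‖ * Real.exp (-(z.im * x))
          ≤ (Cf * Real.exp (-(β * |x - y|))) * (Cg * Real.exp (-(β * |y|))) *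
              Real.exp (|z.im| * |x - y| + |z.im| * |y|) := by
            apply mul_le_mul (mul_le_mul h1 h2 (norm_nonneg _) (by positivity)) h3
              (Real.exp_pos _).le (by positivity)
        _ = (Cf * Cg) * (Real.exp (-(β * |x - y|)) * Real.exp (-(β * |y|)) *
              Real.exp (|z.im| * |x - y| + |z.im| * |y|)) := by ring
        _ = (Cf * Cg) * Real.exp (-(β * |x - y|) + -(β * |y|) +
              (|z.im| * |x - y| + |z.im| * |y|)) := by
            rw [← Real.exp_add, ← Real.exp_add]
        _ = (Cf * Cg) * (Real.exp (-(a * |x - y|)) * Real.exp (-(a * |y|))) := by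
            rw [← Real.exp_add]
            congr 1
            rw [hadef]; ring
        _ = (Cf * Real.exp (-(a * |x - y|))) * (Cg * Real.exp (-(a * |y|))) := by ring
  set c : ℝ := 1 / Real.sqrt (2 * Real.pi) with hcdef
  set If : ℂ := ∫ m : ℝ, f m * E m with hIfdef
  set Ig : ℂ := ∫ m : ℝ, g m * E m with hIgdef
  have hinner : ∀ m₁ : ℝ, (∫ m : ℝ, f (m - m₁) * g m₁ * E m) = If * (g m₁ * E m₁) := by
    intro m₁
    calc (∫ m : ℝ, f (m - m₁) * g m₁ * E m)
        = ∫ u : ℝ, f (u + m₁ - m₁) * g m₁ * E (u + m₁) :=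
          (integral_add_right_eq_self (fun m => f (m - m₁) * g m₁ * E m) m₁).symm
      _ = ∫ u : ℝ, (f u * E u) * (g m₁ * E m₁) := by
          congr 1
          funext u
          rw [add_sub_cancel_right, hEadd u m₁]
          ring
      _ = If * (g m₁ * E m₁) := by
          rw [hIfdef]
          exact integral_mul_const _ _
  have hswap : (∫ m : ℝ, ∫ m₁ : ℝ, f (m - m₁) * g m₁ * E m) =
      ∫ m₁ : ℝ, ∫ m : ℝ, f (m - m₁) * g m₁ * E m := by
    exact integral_integral_swap hprod
  have hRHS : Finv (fun m => ((c : ℝ) : ℂ) * ∫ m₁ : ℝ, f (m - m₁) * g m₁) z =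
      (c : ℂ) * ((c : ℂ) * (If * Ig)) := by
    unfold Finv
    rw [← hcdef]
    simp only [show ∀ x : ℝ, Complex.exp (Complex.I * z * (x : ℂ)) = E x from fun _ => rfl]
    congr 1
    have hpt : (fun m : ℝ => (((c : ℝ) : ℂ) * ∫ m₁ : ℝ, f (m - m₁) * g m₁) * E m) =
        fun m : ℝ => ((c : ℝ) : ℂ) * ∫ m₁ : ℝ, f (m - m₁) * g m₁ * E m := by
      funext m
      rw [mul_assoc]
      congr 1
      exact (integral_mul_const (E m) _).symm
    rw [hpt, integral_const_mul]
    congr 1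
    rw [hswap]
    have hpt2 : (fun m₁ : ℝ => ∫ m : ℝ, f (m - m₁) * g m₁ * E m) =
        fun m₁ : ℝ => If * (g m₁ * E m₁) := funext hinner
    rw [hpt2, integral_const_mul, hIgdef]
  rw [hRHS]
  show ((c : ℝ) : ℂ) * If * (((c : ℝ) : ℂ) * Ig) = _
  ring

end InvFourierAux

/-- Properties of the inverse Fourier transform on `E_{(β,μ)}`:
analytic extension to the strip `H_β`, derivative, and convolution. -/
theorem inverse_fourier_props (β μ : ℝ) (hβ : 0 < β) (hμ : 1 < μ)
    (f : ℝ → ℂ) (hf : memE β μ f) :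
    DifferentiableOn ℂ (Finv f) (HStrip β) ∧
    (memE β (μ - 1) (fun m => Complex.I * (m : ℂ) * f m) ∧
      ∀ z ∈ HStrip β, deriv (Finv f) z = Finv (fun m => Complex.I * (m : ℂ) * f m) z) ∧
    (∀ g : ℝ → ℂ, memE β μ g →
      memE β μ (fun m => ((1 / Real.sqrt (2 * Real.pi) : ℝ) : ℂ) *
        ∫ m₁ : ℝ, f (m - m₁) * g m₁) ∧
      ∀ z ∈ HStrip β, Finv f z * Finv g z =
        Finv (fun m => ((1 / Real.sqrt (2 * Real.pi) : ℝ) : ℂ) *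
          ∫ m₁ : ℝ, f (m - m₁) * g m₁) z) := by
  obtain ⟨hfc, Cf, hCf⟩ := hf
  have hμ0 : (0:ℝ) ≤ μ := by linarith
  have hderiv : ∀ z ∈ HStrip β, HasDerivAt (Finv f)
      (Finv (fun m => Complex.I * (m : ℂ) * f m) z) z := fun z hz =>
    hasDerivAt_Finv hβ hμ hfc hCf hz
  refine ⟨?_, ⟨?_, ?_⟩, ?_⟩
  · intro z hz
    exact ((hderiv z hz).differentiableAt).differentiableWithinAt
  · exact ⟨(continuous_const.mul Complex.continuous_ofReal).mul hfc, Cf, phi_bound hCf⟩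
  · intro z hz
    exact (hderiv z hz).deriv
  · intro g hg
    obtain ⟨hgc, Cg, hCg⟩ := hg
    refine ⟨⟨?_, ?_⟩, ?_⟩
    · apply continuous_const.mul
      apply continuous_of_dominated (bound := fun m₁ => Cf * ‖g m₁‖)
      · intro m
        exact ((hfc.comp (continuous_const.sub continuous_id)).mul hgc).aestronglyMeasurable
      · intro m
        refine Filter.Eventually.of_forall fun m₁ => ?_
        rw [norm_mul]
        apply mul_le_mul_of_nonneg_right _ (norm_nonneg _)
        exact abs_le_const hβ.le hμ0 hCf _
      · exact (integrable_of_memE hβ hμ0 hgc hCg).norm.const_mul Cf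
      · exact Filter.Eventually.of_forall fun m₁ =>
          (hfc.comp (continuous_id.sub continuous_const)).mul continuous_const
    · exact ⟨_, fun m => conv_bound hβ hμ hCf hCg m⟩
    · intro z hz
      exact conv_identity hβ hμ hfc hgc hCf hCg hz
end
end
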